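/- arXiv:1806.04335 — 4 statements merged into one kernel-verified Lean document; each statement's English description precedes it below -/
import Mathlib

section
/- Recursive feasibility of the robust MPC: if the robust finite-horizon optimization problem is feasible at time t with parameter set Θ_t, and Θ_{t+1} ⊆ Θ_t, then the shifted policy sequence (appending the terminal feedback −Kx) is feasible at time t+1 for the realized next state, for any realized disturbance w_t ∈ 𝕎 and true parameter θ_a ∈ Θ_{t+1}. -/
/-- Predicted trajectory of the closed-loop prediction model
`x_{k+1} = A_cl x_k + B₁ v_k + E θ_k + w_k`. -/
def predTraj {n m p : ℕ}
    (Acl : Matrix (Fin n) (Fin n) ℝ) (B₁ : Matrix (Fin n) (Fin m) ℝ)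
    (E : Matrix (Fin n) (Fin p) ℝ)
    (x0 : Fin n → ℝ) (v : ℕ → Fin m → ℝ) (w : ℕ → Fin n → ℝ)
    (θ : ℕ → Fin p → ℝ) : ℕ → Fin n → ℝ
  | 0 => x0
  | k+1 => Acl.mulVec (predTraj Acl B₁ E x0 v w θ k) + B₁.mulVec (v k)
      + E.mulVec (θ k) + w k

/-- Feasibility of the robust MPC problem with horizon `N`, parameter set `Θ`,
terminal set `Xf`, at state `x0`, for the input sequence `v`. -/
def Feasible {n m p s : ℕ} (N : ℕ)
    (Acl : Matrix (Fin n) (Fin n) ℝ) (B₁ : Matrix (Fin n) (Fin m) ℝ)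
    (E : Matrix (Fin n) (Fin p) ℝ)
    (K : Matrix (Fin m) (Fin n) ℝ)
    (C : Matrix (Fin s) (Fin n) ℝ) (D : Matrix (Fin s) (Fin m) ℝ) (b : Fin s → ℝ)
    (W : Set (Fin n → ℝ)) (Θ : Set (Fin p → ℝ)) (Xf : Set (Fin n → ℝ))
    (x0 : Fin n → ℝ) (v : ℕ → Fin m → ℝ) : Prop :=
  ∀ (w : ℕ → Fin n → ℝ) (θ : ℕ → Fin p → ℝ),
    (∀ k, w k ∈ W) → (∀ k, θ k ∈ Θ) →
    (∀ k < N, C.mulVec (predTraj Acl B₁ E x0 v w θ k)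
        + D.mulVec (-K.mulVec (predTraj Acl B₁ E x0 v w θ k) + v k) ≤ b) ∧
    predTraj Acl B₁ E x0 v w θ N ∈ Xf

/-- Recursive feasibility: the shifted input sequence (appending the terminal
feedback, i.e. `v = 0`) is feasible at time `t+1` for the realized next state. -/
theorem mpc_recursive_feasibility {n m p s : ℕ} (N : ℕ) (hN : 1 ≤ N)
    (Acl : Matrix (Fin n) (Fin n) ℝ) (B₁ : Matrix (Fin n) (Fin m) ℝ)
    (E : Matrix (Fin n) (Fin p) ℝ) (K : Matrix (Fin m) (Fin n) ℝ)
    (C : Matrix (Fin s) (Fin n) ℝ) (D : Matrix (Fin s) (Fin m) ℝ) (b : Fin s → ℝ)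
    (W : Set (Fin n → ℝ)) (Θt Θt1 : Set (Fin p → ℝ))
    (Xt Xt1 : Set (Fin n → ℝ))
    (hΘ : Θt1 ⊆ Θt) (hX : Xt ⊆ Xt1)
    -- Xt is robust positively invariant w.r.t. Θt:
    (hinv : ∀ x ∈ Xt, ∀ w ∈ W, ∀ θ ∈ Θt, Acl.mulVec x + w + E.mulVec θ ∈ Xt)
    (hcon : ∀ x ∈ Xt, (C - D * K).mulVec x ≤ b)
    (xt : Fin n → ℝ) (v : ℕ → Fin m → ℝ)
    (hfeas : Feasible N Acl B₁ E K C D b W Θt Xt xt v)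
    -- realized disturbance and true parameter:
    (wt : Fin n → ℝ) (θa : Fin p → ℝ) (hwt : wt ∈ W) (hθa : θa ∈ Θt1)
    (xt1 : Fin n → ℝ)
    (hxt1 : xt1 = Acl.mulVec xt + B₁.mulVec (v 0) + E.mulVec θa + wt) :
    Feasible N Acl B₁ E K C D b W Θt1 Xt1 xt1
      (fun k => if k < N - 1 then v (k+1) else 0) := by
  intro w θ hw hθ
  -- combined sequences at time t
  set w' : ℕ → Fin n → ℝ := fun k => Nat.rec wt (fun j _ => w j) k with hw'
  set θ' : ℕ → Fin p → ℝ := fun k => Nat.rec θa (fun j _ => θ j) k with hθ'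
  have hw'W : ∀ k, w' k ∈ W := by rintro (_|k); exact hwt; exact hw k
  have hθ'Θ : ∀ k, θ' k ∈ Θt := by rintro (_|k); exact hΘ hθa; exact hΘ (hθ k)
  obtain ⟨hconsOld, htermOld⟩ := hfeas w' θ' hw'W hθ'Θ
  set v' : ℕ → Fin m → ℝ := fun k => if k < N - 1 then v (k+1) else 0 with hv'
  set x' := predTraj Acl B₁ E xt1 v' w θ with hx'
  set y := predTraj Acl B₁ E xt v w' θ' with hy
  -- shift identity
  have hshift : ∀ k, k + 1 ≤ N → x' k = y (k+1) := by
    intro k hk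
    induction k with
    | zero =>
      simp only [hx', hy, predTraj]
      rw [hxt1]
      rfl
    | succ k ih =>
      have hk' : k + 1 ≤ N := by omega
      have hkN : k < N - 1 := by omega
      have hvk : v' k = v (k+1) := by simp [hv', hkN]
      show Acl.mulVec (x' k) + B₁.mulVec (v' k) + E.mulVec (θ k) + w k = _
      rw [ih hk', hvk]
      rfl
  have hxN1 : x' (N-1) ∈ Xt := by
    have := hshift (N-1) (by omega)
    rw [this]
    have : N - 1 + 1 = N := by omega
    rw [this]; exact htermOld
  refine ⟨?_, ?_⟩
  · intro k hk
    by_cases hkc : k < N - 1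
    · have hxk : x' k = y (k+1) := hshift k (by omega)
      have := hconsOld (k+1) (by omega)
      have hvk : v' k = v (k+1) := by simp [hv', hkc]
      show C.mulVec (x' k) + D.mulVec (-K.mulVec (x' k) + v' k) ≤ b
      rw [hxk, hvk]
      exact this
    · have hkeq : k = N - 1 := by omega
      subst hkeq
      have hvk : v' (N-1) = 0 := by simp [hv']
      show C.mulVec (x' (N-1)) + D.mulVec (-K.mulVec (x' (N-1)) + v' (N-1)) ≤ b
      rw [hvk, add_zero]
      have h1 := hcon _ hxN1
      rw [Matrix.sub_mulVec] at h1
      have h2 : D.mulVec (-K.mulVec (x' (N-1))) = -(D*K).mulVec (x' (N-1)) := by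
        rw [Matrix.mulVec_neg, Matrix.mulVec_mulVec]
      rw [h2, ← sub_eq_add_neg]
      exact h1
  · have hNeq : N = (N - 1) + 1 := by omega
    have hstep : x' N ∈ Xt := by
      rw [hNeq]
      show Acl.mulVec (x' (N-1)) + B₁.mulVec (v' (N-1)) + E.mulVec (θ (N-1)) + w (N-1) ∈ Xt
      have hvk : v' (N-1) = 0 := by simp [hv']
      rw [hvk, Matrix.mulVec_zero, add_zero]
      have := hinv _ hxN1 (w (N-1)) (hw _) (θ (N-1)) (hΘ (hθ _))
      convert this using 1
      abel
    exact hX hstep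
end

section
/- Under the recursively feasible MPC scheme with terminal invariant set, the closed-loop trajectory satisfies the constraints C Δx_t + D Δδ_t ≤ b at every time step t ≥ 0, provided the problem is feasible at t = 0, all disturbances lie in 𝕎, and θ_a ∈ Θ_t for all t. -/
/-- Closed-loop constraint satisfaction at every time step of the recursively
feasible adaptive robust MPC scheme. -/
theorem mpc_closed_loop_constraints {n m p s : ℕ} (N : ℕ) (hN : 1 ≤ N)
    (A : Matrix (Fin n) (Fin n) ℝ) (B₁ : Matrix (Fin n) (Fin m) ℝ)
    (E : Matrix (Fin n) (Fin p) ℝ) (K : Matrix (Fin m) (Fin n) ℝ)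
    (C : Matrix (Fin s) (Fin n) ℝ) (D : Matrix (Fin s) (Fin m) ℝ) (b : Fin s → ℝ)
    (Acl : Matrix (Fin n) (Fin n) ℝ) (hAcl : Acl = A - B₁ * K)
    (W : Set (Fin n → ℝ)) (Θ : ℕ → Set (Fin p → ℝ))
    (X : ℕ → Set (Fin n → ℝ))
    (hΘnest : ∀ t, Θ (t+1) ⊆ Θ t)
    (hXnest : ∀ t, X t ⊆ X (t+1))
    (hinv : ∀ t, ∀ x ∈ X t, ∀ w ∈ W, ∀ θ ∈ Θ t, Acl.mulVec x + w + E.mulVec θ ∈ X t)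
    (hXcon : ∀ t, ∀ x ∈ X t, (C - D * K).mulVec x ≤ b)
    (x : ℕ → Fin n → ℝ) (v : ℕ → Fin m → ℝ) (w : ℕ → Fin n → ℝ) (θa : Fin p → ℝ)
    (hw : ∀ t, w t ∈ W) (hθa : ∀ t, θa ∈ Θ t)
    -- closed-loop dynamics with applied input Δδ_t = -K x_t + v_t:
    (hdyn : ∀ t, x (t+1) = A.mulVec (x t)
        + B₁.mulVec (-K.mulVec (x t) + v t) + E.mulVec θa + w t)
    -- the MPC problem is feasible at t = 0:
    (hfeas0 : ∃ vs, Feasible N Acl B₁ E K C D b W (Θ 0) (X 0) (x 0) vs)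
    -- v_t is the first element of some feasible solution at time t, whenever one exists:
    (hsel : ∀ t, (∃ vs, Feasible N Acl B₁ E K C D b W (Θ t) (X t) (x t) vs) →
      ∃ vs, Feasible N Acl B₁ E K C D b W (Θ t) (X t) (x t) vs ∧ vs 0 = v t) :
    ∀ t, C.mulVec (x t) + D.mulVec (-K.mulVec (x t) + v t) ≤ b := by
  -- closed-loop dynamics in Acl form
  have hx : ∀ t, x (t+1) = Acl.mulVec (x t) + B₁.mulVec (v t) + E.mulVec θa + w t := by
    intro t
    rw [hdyn t, hAcl]
    simp only [Matrix.sub_mulVec, Matrix.mulVec_add, Matrix.mulVec_neg,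
      ← Matrix.mulVec_mulVec]
    abel
  -- recursive feasibility
  have hF : ∀ t, ∃ vs, Feasible N Acl B₁ E K C D b W (Θ t) (X t) (x t) vs := by
    intro t
    induction t with
    | zero => exact hfeas0
    | succ t ih =>
      obtain ⟨vs, hvs, hvs0⟩ := hsel t ih
      refine ⟨fun k => if k + 1 < N then vs (k+1) else 0, ?_⟩
      intro w' θ' hw' hθ'
      set vs' : ℕ → Fin m → ℝ := fun k => if k + 1 < N then vs (k+1) else 0 with hvs'
      set w'' : ℕ → Fin n → ℝ := fun k => match k with | 0 => w t | k+1 => w' k with hw''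
      set θ'' : ℕ → Fin p → ℝ := fun k => match k with | 0 => θa | k+1 => θ' k with hθ''
      have hw''mem : ∀ k, w'' k ∈ W := by
        intro k; cases k with
        | zero => exact hw t
        | succ k => exact hw' k
      have hθ''mem : ∀ k, θ'' k ∈ Θ t := by
        intro k; cases k with
        | zero => exact hθa t
        | succ k => exact hΘnest t (hθ' k)
      obtain ⟨hcon, hterm⟩ := hvs w'' θ'' hw''mem hθ''mem
      -- shift identity for predicted trajectories
      have hshift : ∀ k, k < N →
          predTraj Acl B₁ E (x (t+1)) vs' w' θ' k
            = predTraj Acl B₁ E (x t) vs w'' θ'' (k+1) := by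
        intro k hk
        induction k with
        | zero =>
          show x (t+1) = _
          rw [hx t, ← hvs0]
          rfl
        | succ k ihk =>
          have hk' : k < N := Nat.lt_of_succ_lt hk
          show Acl.mulVec (predTraj Acl B₁ E (x (t+1)) vs' w' θ' k)
              + B₁.mulVec (vs' k) + E.mulVec (θ' k) + w' k = _
          rw [ihk hk']
          have : vs' k = vs (k+1) := by simp [hvs', hk]
          rw [this]
          rfl
      constructor
      · intro k hk
        rcases lt_or_ge (k+1) N with hk1 | hk1
        · have hv' : vs' k = vs (k+1) := by simp [hvs', hk1]
          rw [hshift k hk, hv']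
          exact hcon (k+1) hk1
        · have hkN : k + 1 = N := le_antisymm hk hk1
          have hv' : vs' k = 0 := by simp [hvs', hkN]
          have hmem : predTraj Acl B₁ E (x (t+1)) vs' w' θ' k ∈ X t := by
            rw [hshift k hk, hkN]; exact hterm
          have := hXcon t _ hmem
          rw [hv']
          calc C.mulVec (predTraj Acl B₁ E (x (t+1)) vs' w' θ' k)
                + D.mulVec (-K.mulVec (predTraj Acl B₁ E (x (t+1)) vs' w' θ' k) + 0)
              = (C - D * K).mulVec (predTraj Acl B₁ E (x (t+1)) vs' w' θ' k) := by
                simp only [add_zero, Matrix.sub_mulVec, Matrix.mulVec_neg,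
                  ← Matrix.mulVec_mulVec]
                abel
            _ ≤ b := this
      · -- terminal set membership
        obtain ⟨N', rfl⟩ : ∃ N', N = N' + 1 := ⟨N - 1, (Nat.succ_pred_eq_of_pos hN).symm⟩
        have hmem : predTraj Acl B₁ E (x (t+1)) vs' w' θ' N' ∈ X t := by
          rw [hshift N' (Nat.lt_succ_self N')]; exact hterm
        have hv' : vs' N' = 0 := by simp [hvs']
        have : predTraj Acl B₁ E (x (t+1)) vs' w' θ' (N'+1)
            = Acl.mulVec (predTraj Acl B₁ E (x (t+1)) vs' w' θ' N') + w' N'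
              + E.mulVec (θ' N') := by
          show Acl.mulVec _ + B₁.mulVec (vs' N') + E.mulVec (θ' N') + w' N' = _
          rw [hv', Matrix.mulVec_zero]
          abel
        rw [this]
        exact hXnest t (hinv t _ hmem _ (hw' N') _ (hΘnest t (hθ' N')))
  -- conclude: apply feasibility at each t with realized disturbance/parameter
  intro t
  obtain ⟨vs, hvs, hvs0⟩ := hsel t (hF t)
  obtain ⟨hcon, -⟩ := hvs (fun _ => w t) (fun _ => θa) (fun _ => hw t) (fun _ => hθa t)
  have := hcon 0 hN
  rw [hvs0] at this
  exact this
end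

section
/- LP duality for robust constraints: the semi-infinite constraint F v + G s ≤ c + H x for all s ∈ 𝕊 = {s : S s ≤ h} holds if and only if there exists a nonnegative matrix Z with Zᵀ S = G (row-wise) and F v + Zᵀ h ≤ c + H x, provided 𝕊 is nonempty and bounded. -/
open Matrix Finset

lemma farkas {η : Type*} [Fintype η] :
    ∀ (N : ℕ) (u : Fin N → η → ℝ) (b : η → ℝ),
    (∀ y : η → ℝ, (∀ i, 0 ≤ u i ⬝ᵥ y) → 0 ≤ b ⬝ᵥ y) →
    ∃ z : Fin N → ℝ, (∀ i, 0 ≤ z i) ∧ ∑ i, z i • u i = b := by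
  intro N
  induction N with
  | zero =>
    intro u b hb
    have h1 := hb (-b) (fun i => (Fin.elim0 i))
    have h2 : b ⬝ᵥ (-b) = -(b ⬝ᵥ b) := by simp
    have h3 : 0 ≤ b ⬝ᵥ b := Finset.sum_nonneg (fun i _ => mul_self_nonneg (b i))
    have hb0 : b = 0 := by
      rw [← dotProduct_self_eq_zero (v := b)]
      rw [h2] at h1
      linarith
    exact ⟨0, fun i => le_refl 0, by simp [hb0]⟩
  | succ N ih =>
    intro u b hb
    by_cases hc : ∃ z : Fin N → ℝ, (∀ i, 0 ≤ z i) ∧ ∑ i, z i • u i.succ = b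
    · obtain ⟨z, hz, hsum⟩ := hc
      refine ⟨Fin.cons 0 z, ?_, ?_⟩
      · intro i; refine Fin.cases ?_ ?_ i <;> simp [hz]
      · rw [Fin.sum_univ_succ]; simpa using hsum
    · -- b not in cone of tail; get separating y from IH (contrapositive)
      have hy : ∃ y : η → ℝ, (∀ i : Fin N, 0 ≤ u i.succ ⬝ᵥ y) ∧ b ⬝ᵥ y < 0 := by
        by_contra hno
        push_neg at hno
        exact hc (ih (fun i => u i.succ) b hno)
      obtain ⟨y, hy1, hy2⟩ := hy
      have h0 : u 0 ⬝ᵥ y < 0 := by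
        by_contra h0'
        push_neg at h0'
        have := hb y (fun i => Fin.cases h0' hy1 i)
        linarith
      set c0 : ℝ := u 0 ⬝ᵥ y with hc0
      have hc0ne : c0 ≠ 0 := ne_of_lt h0
      set u' : Fin N → η → ℝ := fun i => u i.succ - ((u i.succ ⬝ᵥ y) / c0) • u 0 with hu'
      set b' : η → ℝ := b - ((b ⬝ᵥ y) / c0) • u 0 with hb'
      have key : ∀ y' : η → ℝ, (∀ i, 0 ≤ u' i ⬝ᵥ y') → 0 ≤ b' ⬝ᵥ y' := by
        intro y' hy'
        set y2 : η → ℝ := y' - ((u 0 ⬝ᵥ y') / c0) • y with hy2def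
        have e0 : u 0 ⬝ᵥ y2 = 0 := by
          simp [hy2def, dotProduct_sub, dotProduct_smul, smul_eq_mul]
          field_simp
          rw [hc0]; ring
        have ei : ∀ i : Fin N, u i.succ ⬝ᵥ y2 = u' i ⬝ᵥ y' := by
          intro i
          simp [hy2def, hu', dotProduct_sub, sub_dotProduct,
            dotProduct_smul, smul_dotProduct, smul_eq_mul]
          ring
        have eb : b ⬝ᵥ y2 = b' ⬝ᵥ y' := by
          simp [hy2def, hb', dotProduct_sub, sub_dotProduct,
            dotProduct_smul, smul_dotProduct, smul_eq_mul]
          ring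
        have := hb y2 (fun i => Fin.cases (le_of_eq e0.symm) (fun i => (ei i) ▸ hy' i) i)
        linarith [eb ▸ this]
      obtain ⟨z, hz, hsum⟩ := ih u' b' key
      set t : ℝ := ((b ⬝ᵥ y) - ∑ i, z i * (u i.succ ⬝ᵥ y)) / c0 with ht
      have htpos : 0 ≤ t := by
        have hnum : (b ⬝ᵥ y) - ∑ i, z i * (u i.succ ⬝ᵥ y) < 0 := by
          have : 0 ≤ ∑ i, z i * (u i.succ ⬝ᵥ y) :=
            Finset.sum_nonneg (fun i _ => mul_nonneg (hz i) (hy1 i))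
          linarith
        exact le_of_lt (div_pos_of_neg_of_neg hnum h0)
      refine ⟨Fin.cons t z, fun i => Fin.cases htpos hz i, ?_⟩
      rw [Fin.sum_univ_succ]
      simp only [Fin.cons_zero, Fin.cons_succ]
      have expand : ∑ i, z i • u' i
          = ∑ i, z i • u i.succ - (∑ i, z i * (u i.succ ⬝ᵥ y) / c0) • u 0 := by
        calc ∑ i, z i • u' i
            = ∑ i, (z i • u i.succ - (z i * (u i.succ ⬝ᵥ y) / c0) • u 0) := by
              refine Finset.sum_congr rfl fun i _ => ?_
              rw [hu']
              rw [smul_sub, smul_smul]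
              ring_nf
          _ = ∑ i, z i • u i.succ - (∑ i, z i * (u i.succ ⬝ᵥ y) / c0) • u 0 := by
              rw [Finset.sum_sub_distrib, ← Finset.sum_smul]
      rw [expand] at hsum
      have : ∑ i, z i • u i.succ = b' + (∑ i, z i * (u i.succ ⬝ᵥ y) / c0) • u 0 := by
        rw [← hsum]; abel
      rw [this, hb', ht]
      rw [sub_div, Finset.sum_div]
      ext l
      simp [smul_eq_mul]
      ring


/-- LP duality reformulation of the semi-infinite robust constraint
`F v + G s ≤ c + H x` for all `s` in a nonempty bounded polyhedron `𝕊 = {s : S s ≤ h}`. -/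
theorem robust_constraint_duality {mN n d q a : ℕ}
    (F : Matrix (Fin q) (Fin mN) ℝ) (G : Matrix (Fin q) (Fin d) ℝ)
    (H : Matrix (Fin q) (Fin n) ℝ) (c : Fin q → ℝ)
    (S : Matrix (Fin a) (Fin d) ℝ) (h : Fin a → ℝ)
    (v : Fin mN → ℝ) (x : Fin n → ℝ)
    (hne : ∃ s, S.mulVec s ≤ h)
    (hbdd : Bornology.IsBounded {s | S.mulVec s ≤ h}) :
    (∀ s, S.mulVec s ≤ h → F.mulVec v + G.mulVec s ≤ c + H.mulVec x) ↔
    (∃ Z : Matrix (Fin a) (Fin q) ℝ, (∀ i j, 0 ≤ Z i j) ∧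
      Zᵀ * S = G ∧ F.mulVec v + Zᵀ.mulVec h ≤ c + H.mulVec x) := by
  constructor
  · intro hrob
    -- generators in ℝ^(Fin d ⊕ Unit)
    set u : Fin (a+1) → (Fin d ⊕ Unit) → ℝ :=
      Fin.cons (Sum.elim 0 (fun _ => 1)) (fun k => Sum.elim (S k) (fun _ => h k)) with hu
    have hall : ∀ j : Fin q, ∃ z : Fin (a+1) → ℝ, (∀ i, 0 ≤ z i) ∧
        ∑ i, z i • u i = Sum.elim (fun l => G j l) (fun _ => c j + H.mulVec x j - F.mulVec v j) := by
      intro j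
      apply farkas
      intro y hy
      set s : Fin d → ℝ := fun l => y (Sum.inl l) with hs
      set μ : ℝ := y (Sum.inr ()) with hμdef
      have hμ : 0 ≤ μ := by
        have := hy 0
        simpa [hu, dotProduct, Fintype.sum_sum_type] using this
      have hk : ∀ k : Fin a, 0 ≤ S.mulVec s k + h k * μ := by
        intro k
        have := hy k.succ
        simpa [hu, dotProduct, Fintype.sum_sum_type, Matrix.mulVec, hs] using this
      have goal_eq : Sum.elim (fun l => G j l) (fun _ => c j + H.mulVec x j - F.mulVec v j) ⬝ᵥ y
          = G.mulVec s j + (c j + H.mulVec x j - F.mulVec v j) * μ := by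
        simp [dotProduct, Fintype.sum_sum_type, Matrix.mulVec, hs]
        exact Or.inl rfl
      rw [goal_eq]
      rcases eq_or_lt_of_le hμ with hμ0 | hμpos
      · -- μ = 0 : s must be 0 by boundedness
        have hk0 : ∀ k, 0 ≤ S.mulVec s k := by
          intro k; have := hk k; rw [← hμ0] at this; simpa using this
        have hs0 : s = 0 := by
          by_contra hsne
          obtain ⟨l, hl⟩ : ∃ l, s l ≠ 0 := by
            by_contra hno; push_neg at hno; exact hsne (funext hno)
          obtain ⟨s0, hs0f⟩ := hne
          obtain ⟨C, hC⟩ := hbdd.exists_norm_le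
          set t : ℝ := (|C| + ‖s0‖ + 1) / |s l| with htdef
          have htpos : 0 ≤ t := by positivity
          have hmem : S.mulVec (s0 - t • s) ≤ h := by
            intro k
            have h1 : S.mulVec (s0 - t • s) k = S.mulVec s0 k - t * S.mulVec s k := by
              rw [Matrix.mulVec_sub, Matrix.mulVec_smul]
              simp
            rw [h1]
            have := mul_nonneg htpos (hk0 k)
            have := hs0f k
            linarith
          have hnorm := hC (s0 - t • s) hmem
          have habs : |(s0 - t • s) l| ≤ ‖s0 - t • s‖ := by
            have := norm_le_pi_norm (s0 - t • s) l
            simpa [Real.norm_eq_abs] using this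
          have habs0 : |s0 l| ≤ ‖s0‖ := by
            have := norm_le_pi_norm s0 l
            simpa [Real.norm_eq_abs] using this
          have hts : t * |s l| = |C| + ‖s0‖ + 1 := by
            rw [htdef]; field_simp
          have hlow : t * |s l| - |s0 l| ≤ |(s0 - t • s) l| := by
            have h1 : |t * s l| - |s0 l| ≤ |t * s l - s0 l| :=
              abs_sub_abs_le_abs_sub (t * s l) (s0 l)
            have h2 : |t * s l| = t * |s l| := by
              rw [abs_mul, abs_of_nonneg htpos]
            have h3 : |t * s l - s0 l| = |(s0 - t • s) l| := by
              rw [abs_sub_comm]; simp [smul_eq_mul]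
            linarith [h2 ▸ h3 ▸ h1]
          have : C < ‖s0 - t • s‖ := by
            have hCC : C ≤ |C| := le_abs_self C
            linarith
          linarith [hnorm]
        rw [hs0]
        simp [← hμ0, Matrix.mulVec]
      · -- μ > 0
        set s' : Fin d → ℝ := (-μ⁻¹) • s with hs'
        have hfeas : S.mulVec s' ≤ h := by
          intro k
          rw [hs', Matrix.mulVec_smul]
          have hk' := hk k
          have hinv : 0 < μ⁻¹ := inv_pos.mpr hμpos
          have : (-μ⁻¹) * S.mulVec s k ≤ μ⁻¹ * (h k * μ) := by nlinarith
          have hμμ : μ⁻¹ * (h k * μ) = h k := by field_simp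
          simpa [smul_eq_mul, hμμ] using this.trans_eq hμμ
        have := hrob s' hfeas j
        have hG : G.mulVec s' j = (-μ⁻¹) * G.mulVec s j := by
          rw [hs', Matrix.mulVec_smul]; simp
        simp only [Pi.add_apply] at this
        rw [hG] at this
        have h2 : μ * (-μ⁻¹ * G.mulVec s j) ≤ μ * (c j + H.mulVec x j - F.mulVec v j) := by
          apply mul_le_mul_of_nonneg_left _ hμ
          linarith
        have h3 : μ * (-μ⁻¹ * G.mulVec s j) = -(G.mulVec s j) := by
          field_simp
        nlinarith [h2, h3]
    choose zf hz1 hz2 using hall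
    refine ⟨Matrix.of fun k j => zf j k.succ, fun k j => hz1 j k.succ, ?_, ?_⟩
    · ext j l
      have := congrFun (hz2 j) (Sum.inl l)
      rw [Finset.sum_apply] at this
      rw [Fin.sum_univ_succ] at this
      simp only [hu, Fin.cons_zero, Fin.cons_succ, Pi.smul_apply, Sum.elim_inl, smul_eq_mul] at this
      simp only [Matrix.mul_apply, Matrix.transpose_apply]
      simpa using this
    · intro j
      have := congrFun (hz2 j) (Sum.inr ())
      rw [Finset.sum_apply] at this
      rw [Fin.sum_univ_succ] at this
      simp only [hu, Fin.cons_zero, Fin.cons_succ, Pi.smul_apply, Sum.elim_inr, smul_eq_mul,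
        mul_one] at this
      have hz0 := hz1 j 0
      have hmv : (Matrix.of fun k j' => zf j' k.succ)ᵀ.mulVec h j = ∑ k, zf j k.succ * h k := by
        simp [Matrix.mulVec, dotProduct, Matrix.transpose_apply]
      simp only [Pi.add_apply, hmv]
      linarith [this]
  · rintro ⟨Z, hZ, hZS, hZh⟩ s hs j
    have h1 : G.mulVec s j = Zᵀ.mulVec (S.mulVec s) j := by
      rw [← hZS, ← Matrix.mulVec_mulVec]
    have h2 : Zᵀ.mulVec (S.mulVec s) j ≤ Zᵀ.mulVec h j := by
      simp only [Matrix.mulVec, dotProduct, Matrix.transpose_apply]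
      exact Finset.sum_le_sum (fun k _ => mul_le_mul_of_nonneg_left (hs k) (hZ k j))
    have h3 := hZh j
    simp only [Pi.add_apply] at h3 ⊢
    linarith [h1 ▸ h2]
end

section
/- If the parameter sets are nested (Θ_{t+1} ⊆ Θ_t for all t) then the sequence of maximal robust positive invariant sets is nondecreasing and its union is robust positively invariant with respect to ∩_t Θ_t. -/
open Matrix

/-- Robust positive invariance w.r.t. a parameter set `Θ`. -/
def RPI {n m p s : ℕ}
    (Acl : Matrix (Fin n) (Fin n) ℝ) (E : Matrix (Fin n) (Fin p) ℝ)
    (W : Set (Fin n → ℝ)) (Θ : Set (Fin p → ℝ))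
    (C : Matrix (Fin s) (Fin n) ℝ) (D : Matrix (Fin s) (Fin m) ℝ)
    (K : Matrix (Fin m) (Fin n) ℝ) (b : Fin s → ℝ)
    (X : Set (Fin n → ℝ)) : Prop :=
  X ⊆ {x | (C - D * K).mulVec x ≤ b} ∧
  ∀ x ∈ X, ∀ w ∈ W, ∀ θ ∈ Θ, Acl.mulVec x + w + E.mulVec θ ∈ X

/-- With nested parameter sets, the maximal robust positive invariant sets are
nondecreasing and their union is robust positively invariant w.r.t. `⋂ t, Θ t`. -/
theorem maximal_rpi_nondecreasing {n m p s : ℕ}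
    (Acl : Matrix (Fin n) (Fin n) ℝ) (E : Matrix (Fin n) (Fin p) ℝ)
    (W : Set (Fin n → ℝ))
    (C : Matrix (Fin s) (Fin n) ℝ) (D : Matrix (Fin s) (Fin m) ℝ)
    (K : Matrix (Fin m) (Fin n) ℝ) (b : Fin s → ℝ)
    (Θ : ℕ → Set (Fin p → ℝ)) (hΘnest : ∀ t, Θ (t+1) ⊆ Θ t)
    (𝒳 : ℕ → Set (Fin n → ℝ))
    (hRPI : ∀ t, RPI Acl E W (Θ t) C D K b (𝒳 t))
    (hmax : ∀ t, ∀ X : Set (Fin n → ℝ), RPI Acl E W (Θ t) C D K b X → X ⊆ 𝒳 t) :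
    (∀ t, 𝒳 t ⊆ 𝒳 (t+1)) ∧
    RPI Acl E W (⋂ t, Θ t) C D K b (⋃ t, 𝒳 t) := by
  constructor
  · intro t
    exact hmax (t+1) (𝒳 t)
      ⟨(hRPI t).1, fun x hx w hw θ hθ => (hRPI t).2 x hx w hw θ (hΘnest t hθ)⟩
  · constructor
    · intro x hx
      obtain ⟨t, ht⟩ := Set.mem_iUnion.mp hx
      exact (hRPI t).1 ht
    · intro x hx w hw θ hθ
      obtain ⟨t, ht⟩ := Set.mem_iUnion.mp hx
      exact Set.mem_iUnion.mpr ⟨t, (hRPI t).2 x ht w hw θ (Set.mem_iInter.mp hθ t)⟩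
end
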